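/- Let Λ ⊂ ℝ^d be an additive subgroup with ∏_j |z_j| ≥ 1 for all nonzero z ∈ Λ, and a > 1 with r = ⌊d·log₂ a⌋. Then the dyadic shell ρ(m) contains no nonzero points of aΛ whenever ‖m‖₁ ≤ r. -/

import Mathlib

open Real

/-- If `Λ ⊆ ℝ^d` is an additive subgroup with `∏_j |z_j| ≥ 1` for all nonzero `z ∈ Λ`,
`a > 1` and `r = ⌊d·log₂ a⌋`, then the dyadic shell `ρ(m)` contains no nonzero point of
`aΛ` whenever `‖m‖₁ ≤ r`. -/
theorem stmt_15 (d : ℕ) (Λ : AddSubgroup (Fin d → ℝ))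
    (hΛ : ∀ z ∈ Λ, z ≠ 0 → 1 ≤ ∏ j : Fin d, |z j|)
    (a : ℝ) (ha : 1 < a) (m : Fin d → ℕ)
    (hm : (∑ j, (m j : ℤ)) ≤ ⌊(d : ℝ) * Real.logb 2 a⌋) :
    ∀ z : Fin d → ℝ, (∃ w ∈ Λ, w ≠ 0 ∧ z = a • w) →
      ¬(∀ j, (⌊(2 : ℝ) ^ ((m j : ℤ) - 1)⌋ : ℝ) ≤ |z j| ∧ |z j| < 2 ^ (m j)) := by
  rintro z ⟨w, hw, hw0, rfl⟩ hbound
  have ha0 : (0:ℝ) < a := lt_trans one_pos ha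
  rcases Nat.eq_zero_or_pos d with hd | hd
  · subst hd
    exact hw0 (funext fun j => Fin.elim0 j)
  have hprod : 1 ≤ ∏ j : Fin d, |w j| := hΛ w hw hw0
  have hne : ∀ j, w j ≠ 0 := by
    intro j hj
    have : ∏ j : Fin d, |w j| = 0 := by
      apply Finset.prod_eq_zero (Finset.mem_univ j)
      simp [hj]
    linarith
  -- lower bound a^d ≤ ∏ |z j|
  have h1 : a ^ d ≤ ∏ j : Fin d, |a * w j| := by
    have : ∏ j : Fin d, |a * w j| = a ^ d * ∏ j : Fin d, |w j| := by
      simp [abs_mul, abs_of_pos ha0, Finset.prod_mul_distrib]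
    rw [this]
    nlinarith [pow_pos ha0 d]
  -- strict upper bound by 2^(∑ m j)
  have h2 : ∏ j : Fin d, |a * w j| < ∏ j : Fin d, (2:ℝ) ^ (m j) := by
    apply Finset.prod_lt_prod_of_nonempty
    · intro j _
      exact abs_pos.mpr (mul_ne_zero (ne_of_gt ha0) (hne j))
    · intro j _
      exact (hbound j).2
    · exact Finset.univ_nonempty_iff.mpr (Fin.pos_iff_nonempty.mp hd)
  have h3 : ∏ j : Fin d, (2:ℝ) ^ (m j) = 2 ^ (∑ j, m j) := by
    rw [Finset.prod_pow_eq_pow_sum]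
  -- upper bound 2^(∑ m j) ≤ a^d
  have h4 : (2:ℝ) ^ (∑ j, m j) ≤ a ^ d := by
    have hs : ((∑ j, m j : ℕ) : ℝ) ≤ (d : ℝ) * Real.logb 2 a := by
      have : ((∑ j, m j : ℕ) : ℤ) ≤ ⌊(d : ℝ) * Real.logb 2 a⌋ := by
        push_cast
        exact hm
      calc ((∑ j, m j : ℕ) : ℝ) = ((((∑ j, m j : ℕ) : ℤ)) : ℝ) := by push_cast; ring
        _ ≤ ((⌊(d : ℝ) * Real.logb 2 a⌋ : ℤ) : ℝ) := by exact_mod_cast this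
        _ ≤ (d : ℝ) * Real.logb 2 a := Int.floor_le _
    calc (2:ℝ) ^ (∑ j, m j) = (2:ℝ) ^ ((∑ j, m j : ℕ) : ℝ) := by
          rw [Real.rpow_natCast]
      _ ≤ (2:ℝ) ^ ((d : ℝ) * Real.logb 2 a) :=
          Real.rpow_le_rpow_of_exponent_le one_le_two hs
      _ = ((2:ℝ) ^ (Real.logb 2 a)) ^ ((d:ℝ)) := by
          rw [mul_comm, Real.rpow_mul (by norm_num)]
      _ = a ^ ((d:ℝ)) := by
          rw [Real.rpow_logb (by norm_num) (by norm_num) ha0]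
      _ = a ^ d := by rw [Real.rpow_natCast]
  have := h1.trans_lt (h2.trans_le (h3 ▸ h4))
  exact lt_irrefl _ this
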